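/- Every cycle C_n with n ≥ 3 is free (3b, b)-choosable for every positive integer b. -/

import Mathlib

/-- An (L,b)-coloring of `G`: each vertex gets a `b`-element subset of its list,
with disjoint sets on adjacent vertices. -/
def IsLbColoring {V : Type*} (G : SimpleGraph V) (L : V → Finset ℤ) (b : ℕ)
    (c : V → Finset ℤ) : Prop :=
  (∀ v, c v ⊆ L v) ∧ (∀ v, (c v).card = b) ∧ ∀ ⦃v w⦄, G.Adj v w → Disjoint (c v) (c w)

/-- `G` is (a,b)-choosable. -/
def Choosable {V : Type*} (G : SimpleGraph V) (a b : ℕ) : Prop :=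
  ∀ L : V → Finset ℤ, (∀ v, (L v).card = a) → ∃ c, IsLbColoring G L b c

/-- `G` is free (a,b)-choosable. -/
def FreeChoosable {V : Type*} (G : SimpleGraph V) (a b : ℕ) : Prop :=
  ∀ L : V → Finset ℤ, (∀ v, (L v).card = a) →
    ∀ v₀ : V, ∀ c₀ : Finset ℤ, c₀ ⊆ L v₀ → c₀.card = b →
      ∃ c, IsLbColoring G L b c ∧ c v₀ = c₀

/-- The cycle `C n` on vertex set `ZMod n`. -/
def cycleGraph (n : ℕ) : SimpleGraph (ZMod n) :=
  SimpleGraph.fromRel (fun i j => j = i + 1)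

noncomputable def pickSub (s : Finset ℤ) (b : ℕ) : Finset ℤ :=
  if h : b ≤ s.card then (Finset.exists_subset_card_eq h).choose else s

lemma pickSub_subset (s : Finset ℤ) (b : ℕ) : pickSub s b ⊆ s := by
  unfold pickSub
  split
  · exact (Finset.exists_subset_card_eq ‹b ≤ s.card›).choose_spec.1
  · exact subset_rfl

lemma pickSub_card (s : Finset ℤ) (b : ℕ) (h : b ≤ s.card) : (pickSub s b).card = b := by
  unfold pickSub
  rw [dif_pos h]
  exact (Finset.exists_subset_card_eq h).choose_spec.2

/-- every cycle `C_n` with `n ≥ 3` is free (3b,b)-choosable. -/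
theorem stmt19 (n b : ℕ) (hn : 3 ≤ n) (hb : 0 < b) :
    FreeChoosable (cycleGraph n) (3 * b) b := by
  intro L hL v₀ c₀ hc₀sub hc₀card
  haveI : NeZero n := ⟨by omega⟩
  -- greedy sequence of color sets along the cycle starting at `v₀`
  set f : ℕ → Finset ℤ :=
    fun k => Nat.rec c₀ (fun k prev => pickSub (L (v₀ + ((k+1 : ℕ) : ZMod n)) \ (prev ∪ c₀)) b) k
    with hf
  have hf0 : f 0 = c₀ := rfl
  have hfs : ∀ k, f (k+1) = pickSub (L (v₀ + ((k+1 : ℕ) : ZMod n)) \ (f k ∪ c₀)) b :=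
    fun k => rfl
  -- card and subset spec, by induction
  have hspec : ∀ k, (f k).card = b ∧ f k ⊆ L (v₀ + (k : ZMod n)) := by
    intro k
    induction k with
    | zero => exact ⟨hc₀card, by simpa [hf0] using hc₀sub⟩
    | succ k ih =>
      have hcard : b ≤ (L (v₀ + ((k+1 : ℕ) : ZMod n)) \ (f k ∪ c₀)).card := by
        have h1 := Finset.le_card_sdiff (f k ∪ c₀) (L (v₀ + ((k+1 : ℕ) : ZMod n)))
        have h2 := Finset.card_union_le (f k) c₀
        have h3 := hL (v₀ + ((k+1 : ℕ) : ZMod n))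
        have h4 := ih.1
        omega
      refine ⟨by rw [hfs]; exact pickSub_card _ _ hcard, ?_⟩
      rw [hfs]
      exact (pickSub_subset _ _).trans Finset.sdiff_subset
  -- disjointness spec
  have hdisj : ∀ k, Disjoint (f k) (f (k+1)) ∧ Disjoint c₀ (f (k+1)) := by
    intro k
    have hsub : f (k+1) ⊆ L (v₀ + ((k+1 : ℕ) : ZMod n)) \ (f k ∪ c₀) := by
      rw [hfs]; exact pickSub_subset _ _
    have hd : Disjoint (f (k+1)) (f k ∪ c₀) :=
      Finset.sdiff_disjoint.mono_left hsub
    rw [Finset.disjoint_union_right] at hd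
    exact ⟨hd.1.symm, hd.2.symm⟩
  -- the coloring
  refine ⟨fun v => f ((v - v₀).val), ⟨?_, ?_, ?_⟩, ?_⟩
  · intro v
    have := (hspec ((v - v₀).val)).2
    have hv : v₀ + (((v - v₀).val : ℕ) : ZMod n) = v := by
      simp [ZMod.natCast_val, ZMod.cast_id]
    rwa [hv] at this
  · intro v; exact (hspec _).1
  · -- adjacency
    have key : ∀ v : ZMod n, Disjoint (f ((v - v₀).val)) (f ((v + 1 - v₀).val)) := by
      intro v
      set k := (v - v₀).val with hk
      have hklt : k < n := ZMod.val_lt _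
      have hvk : ((k : ℕ) : ZMod n) = v - v₀ := by
        simp [hk, ZMod.natCast_val, ZMod.cast_id]
      have hstep : (v + 1 - v₀) = ((k + 1 : ℕ) : ZMod n) := by
        push_cast
        rw [hvk]; ring
      by_cases h : k + 1 < n
      · have : (v + 1 - v₀).val = k + 1 := by
          rw [hstep, ZMod.val_natCast_of_lt h]
        rw [this]
        exact (hdisj k).1
      · -- k = n - 1, wrap around
        have hkn : k + 1 = n := by omega
        have : (v + 1 - v₀).val = 0 := by
          rw [hstep, hkn]
          simp [ZMod.natCast_self]
        rw [this, hf0]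
        obtain ⟨m, hm⟩ : ∃ m, k = m + 1 := ⟨k - 1, by omega⟩
        rw [hm]
        exact ((hdisj m).2).symm
    intro v w hadj
    rw [cycleGraph, SimpleGraph.fromRel_adj] at hadj
    obtain ⟨hne, h | h⟩ := hadj
    · rw [h]; exact key v
    · rw [h]; exact (key w).symm
  · show f ((v₀ - v₀).val) = c₀
    rw [sub_self, ZMod.val_zero, hf0]
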